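/- In the tensor CUR setting, if A = R ×ᵢ₌₁ⁿ (CᵢUᵢ⁺) holds with R, Cᵢ, Uᵢ as submatrices/subtensors of A and A has Tucker rank (r₁,…,rₙ), then rank(Cᵢ) = rᵢ for all i and the Tucker rank of R is (r₁,…,rₙ). -/

import Mathlib

open Matrix

universe u

/-- `B` is the Moore–Penrose pseudoinverse of `A`. -/
def IsMoorePenroseInv {m n : Type*} [Fintype m] [Fintype n]
    (A : Matrix m n ℝ) (B : Matrix n m ℝ) : Prop :=
  A * B * A = A ∧ B * A * B = B ∧ (A * B)ᵀ = A * B ∧ (B * A)ᵀ = B * A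

/-- Mode-`k` unfolding of an `n`-mode tensor. -/
def unfold {n : ℕ} {κ : Fin n → Type u} (k : Fin n)
    (X : (∀ i, κ i) → ℝ) :
    Matrix (κ k) (∀ i : {j : Fin n // j ≠ k}, κ i.1) ℝ :=
  fun a t => X fun i =>
    if h : i = k then cast (congrArg κ h).symm a else t ⟨i, h⟩

/-- splicing a value at coordinate `k` with values elsewhere -/
def splice {n : ℕ} {κ : Fin n → Type u} (k : Fin n) (b : κ k)
    (t : ∀ j : {j : Fin n // j ≠ k}, κ j.1) : ∀ i, κ i :=
  fun i => if h : i = k then cast (congrArg κ h).symm b else t ⟨i, h⟩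

lemma splice_self {n : ℕ} {κ : Fin n → Type u} (k : Fin n) (b : κ k)
    (t : ∀ j : {j : Fin n // j ≠ k}, κ j.1) : splice k b t k = b := by
  rw [splice, dif_pos rfl]
  exact cast_eq _ b

lemma splice_ne {n : ℕ} {κ : Fin n → Type u} (k : Fin n) (b : κ k)
    (t : ∀ j : {j : Fin n // j ≠ k}, κ j.1) (j : {j : Fin n // j ≠ k}) :
    splice k b t j.1 = t j := by
  rw [splice, dif_neg j.2]

lemma unfold_apply {n : ℕ} {κ : Fin n → Type u} (k : Fin n)
    (X : (∀ i, κ i) → ℝ) (a : κ k) (t : ∀ i : {j : Fin n // j ≠ k}, κ i.1) :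
    unfold k X a t = X (splice k a t) := rfl

/-- equivalence between pairs and full tuples, via splice -/
def spliceEquiv {n : ℕ} (κ : Fin n → Type u) (k : Fin n) :
    (κ k × ∀ j : {j : Fin n // j ≠ k}, κ j.1) ≃ (∀ i, κ i) where
  toFun p := splice k p.1 p.2
  invFun s := (s k, fun j => s j.1)
  left_inv p := by
    refine Prod.ext (splice_self k p.1 p.2) (funext fun j => splice_ne k p.1 p.2 j)
  right_inv s := by
    funext i
    by_cases h : i = k
    · subst h; exact splice_self i _ _
    · exact splice_ne k _ _ ⟨i, h⟩

lemma rank_submatrix_le' {l m o p : Type*} [Fintype m] [Fintype o] [Fintype p]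
    [DecidableEq m] [DecidableEq o]
    (A : Matrix m o ℝ) (f : l → m) (g : p → o) :
    (A.submatrix f g).rank ≤ A.rank := by
  have h1 : A.submatrix f g
      = (1 : Matrix m m ℝ).submatrix f id * A.submatrix id g := by
    have := submatrix_mul (1 : Matrix m m ℝ) A f id g Function.bijective_id
    rwa [Matrix.one_mul] at this
  have h2 : A.submatrix id g = A * (1 : Matrix o o ℝ).submatrix id g := by
    have := submatrix_mul A (1 : Matrix o o ℝ) (id : m → m) id g Function.bijective_id
    rwa [Matrix.mul_one, submatrix_id_id] at this
  calc (A.submatrix f g).rank ≤ (A.submatrix id g).rank := by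
        rw [h1]; exact rank_mul_le_right _ _
    _ ≤ A.rank := by rw [h2]; exact rank_mul_le_left _ _

/-- If the tensor CUR identity `A = R ×ᵢ₌₁ⁿ (CᵢUᵢ⁺)` holds (entrywise) and `A`
has Tucker rank `(r₁, …, rₙ)`, then `rank Cᵢ = rᵢ` for all `i` and the Tucker
rank of `R` is `(r₁, …, rₙ)`. -/
theorem tensor_CUR_ranks {n : ℕ} (d r : Fin n → ℕ)
    (A : (∀ i, Fin (d i)) → ℝ)
    (hTucker : ∀ i, (unfold i A).rank = r i)
    (I : ∀ i, Finset (Fin (d i)))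
    (J : ∀ i, Finset (∀ j : {j : Fin n // j ≠ i}, Fin (d j.1)))
    (R : (∀ i, {x // x ∈ I i}) → ℝ)
    (hR : ∀ idx, R idx = A fun i => (idx i).1)
    (C : ∀ i, Matrix (Fin (d i)) {x // x ∈ J i} ℝ)
    (hC : ∀ i a j, C i a j = unfold i A a j.1)
    (U : ∀ i, Matrix {x // x ∈ I i} {x // x ∈ J i} ℝ)
    (hU : ∀ i a j, U i a j = C i a.1 j)
    (Up : ∀ i, Matrix {x // x ∈ J i} {x // x ∈ I i} ℝ)
    (hUp : ∀ i, IsMoorePenroseInv (U i) (Up i))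
    (hA : ∀ idx, A idx =
      ∑ s : ∀ i, {x // x ∈ I i}, R s * ∏ i, (C i * Up i) (idx i) (s i)) :
    (∀ i, (C i).rank = r i) ∧ (∀ i, (unfold i R).rank = r i) := by
  -- preliminary facts, uniform in the mode k
  have main : ∀ k : Fin n, (C k).rank = r k ∧ (unfold k R).rank = r k := by
    intro k
    set μ : Fin n → Type := fun i => {x // x ∈ I i} with hμ
    -- the "kron" factor
    set W : Matrix (∀ j : {j : Fin n // j ≠ k}, Fin (d j.1))
        (∀ j : {j : Fin n // j ≠ k}, μ j.1) ℝ :=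
      fun t s => ∏ j : {j : Fin n // j ≠ k}, (C j.1 * Up j.1) (t j) (s j) with hW
    -- the factorization
    have hfact : unfold k A = (C k * Up k) * (unfold k R * Wᵀ) := by
      ext a t
      rw [unfold_apply, hA]
      rw [← Equiv.sum_comp (spliceEquiv μ k)]
      rw [Fintype.sum_prod_type]
      rw [Matrix.mul_apply (M := C k * Up k) (N := unfold k R * Wᵀ)]
      refine Finset.sum_congr rfl fun b _ => ?_
      rw [Matrix.mul_apply (M := unfold k R) (N := Wᵀ), Finset.mul_sum]
      refine Finset.sum_congr rfl fun s' _ => ?_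
      have hprod : ∀ g : Fin n → ℝ, (∏ i, g i) = g k * ∏ j : {j : Fin n // j ≠ k}, g j.1 := by
        intro g
        rw [Fintype.prod_eq_mul_prod_compl k g]
        congr 1
        rw [← Finset.prod_subtype ({k}ᶜ : Finset (Fin n)) (fun x => by simp) g]
      have h1 : (spliceEquiv μ k (b, s')) k = b := splice_self k b s'
      have h2 : ∀ j : {j : Fin n // j ≠ k}, (spliceEquiv μ k (b, s')) j.1 = s' j :=
        fun j => splice_ne k b s' j
      rw [hprod (fun i => (C i * Up i) (splice (κ := fun i => Fin (d i)) k a t i) ((spliceEquiv μ k (b, s')) i))]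
      rw [splice_self, h1]
      have h3 : (∏ j : {j : Fin n // j ≠ k},
            (C j.1 * Up j.1) (splice (κ := fun i => Fin (d i)) k a t j.1) ((spliceEquiv μ k (b, s')) j.1))
          = ∏ j : {j : Fin n // j ≠ k}, (C j.1 * Up j.1) (t j) (s' j) := by
        refine Finset.prod_congr rfl fun j _ => by rw [splice_ne, h2]
      rw [h3]
      have h4 : unfold k R b s' = R (spliceEquiv μ k (b, s')) := rfl
      rw [h4]
      simp only [Matrix.transpose_apply, hW]
      exact (mul_left_comm _ _ _).trans rfl
    -- unfold k R is a submatrix of unfold k A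
    have hsubR : unfold k R
        = (unfold k A).submatrix (Subtype.val : μ k → Fin (d k))
            (fun s' (j : {j : Fin n // j ≠ k}) => (s' j).1) := by
      ext b s'
      rw [unfold_apply, hR, Matrix.submatrix_apply, unfold_apply]
      congr 1
      funext i
      simp only [splice]
      split
      · next h => subst h; rfl
      · rfl
    -- C k is a submatrix of unfold k A
    have hsubC : C k = (unfold k A).submatrix id Subtype.val := by
      ext a j
      rw [hC, Matrix.submatrix_apply]
      rfl
    constructor
    · refine le_antisymm ?_ ?_
      · rw [← hTucker k, hsubC]
        exact rank_submatrix_le' _ _ _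
      · rw [← hTucker k, hfact]
        exact le_trans (rank_mul_le_left _ _) (rank_mul_le_left _ _)
    · refine le_antisymm ?_ ?_
      · rw [← hTucker k, hsubR]
        exact rank_submatrix_le' _ _ _
      · rw [← hTucker k, hfact]
        exact le_trans (rank_mul_le_right _ _) (rank_mul_le_left _ _)
  exact ⟨fun i => (main i).1, fun i => (main i).2⟩
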